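/- Let G be a graph, x a vertex, and W a set of vertices with x ∉ W. Among all minimum-size xW-separators (vertex sets S disjoint from {x} whose removal disconnects x from all of W), there is a unique one minimizing the set of vertices reachable from x after its removal; equivalently, if S₁ and S₂ are both minimum xW-separators, then the set of vertices reachable from x in G − S₁ intersected with those reachable in G − S₂ gives rise, via its neighborhood, to an xW-separator of size at most |S₁|, and the closest minimum xW-separator is unique. -/

import Mathlib

/-- The set of vertices reachable from `x` by a walk avoiding `S`. -/
def reachSet {V : Type*} (G : SimpleGraph V) (x : V) (S : Finset V) : Set V :=
  {v | ∃ p : G.Walk x v, ∀ u ∈ p.support, u ∉ S}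

/-- `S` is an `xW`-separator: `x ∉ S` and no vertex of `W` is reachable from
`x` by a walk avoiding `S`. -/
def IsSep {V : Type*} (G : SimpleGraph V) (x : V) (W : Set V) (S : Finset V) : Prop :=
  x ∉ S ∧ ∀ w ∈ W, w ∉ reachSet G x S

/-- `S` is a minimum-size `xW`-separator. -/
def IsMinSep {V : Type*} (G : SimpleGraph V) (x : V) (W : Set V) (S : Finset V) : Prop :=
  IsSep G x W S ∧ ∀ S' : Finset V, IsSep G x W S' → S.card ≤ S'.card

namespace ClosestSep

variable {V : Type*} [Fintype V] [DecidableEq V] (G : SimpleGraph V)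

open Classical in
/-- The boundary of a finset `A`: vertices outside `A` adjacent to `A`. -/
noncomputable def bdry (A : Finset V) : Finset V :=
  Finset.univ.filter (fun v => v ∉ A ∧ ∃ u ∈ A, G.Adj u v)

open Classical in
/-- `reachSet` as a finset. -/
noncomputable def reachF (x : V) (S : Finset V) : Finset V :=
  Finset.univ.filter (fun v => v ∈ reachSet G x S)

lemma mem_bdry {A : Finset V} {v : V} :
    v ∈ bdry G A ↔ v ∉ A ∧ ∃ u ∈ A, G.Adj u v := by
  classical
  simp [bdry]

lemma mem_reachF {x v : V} {S : Finset V} :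
    v ∈ reachF G x S ↔ v ∈ reachSet G x S := by
  classical
  simp [reachF]

lemma bdry_submod (A B : Finset V) :
    (bdry G (A ∩ B)).card + (bdry G (A ∪ B)).card ≤ (bdry G A).card + (bdry G B).card := by
  have hu : bdry G (A ∩ B) ∪ bdry G (A ∪ B) ⊆ bdry G A ∪ bdry G B := by
    intro v hv
    rcases Finset.mem_union.mp hv with hv | hv
    · obtain ⟨hvn, u, hu, hadj⟩ := (mem_bdry G).mp hv
      have huA : u ∈ A := (Finset.mem_inter.mp hu).1
      have huB : u ∈ B := (Finset.mem_inter.mp hu).2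
      by_cases hvA : v ∈ A
      · have hvB : v ∉ B := fun hB => hvn (Finset.mem_inter.mpr ⟨hvA, hB⟩)
        exact Finset.mem_union_right _ ((mem_bdry G).mpr ⟨hvB, u, huB, hadj⟩)
      · exact Finset.mem_union_left _ ((mem_bdry G).mpr ⟨hvA, u, huA, hadj⟩)
    · obtain ⟨hvn, u, hu, hadj⟩ := (mem_bdry G).mp hv
      have hvA : v ∉ A := fun h => hvn (Finset.mem_union_left _ h)
      have hvB : v ∉ B := fun h => hvn (Finset.mem_union_right _ h)
      rcases Finset.mem_union.mp hu with h | h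
      · exact Finset.mem_union_left _ ((mem_bdry G).mpr ⟨hvA, u, h, hadj⟩)
      · exact Finset.mem_union_right _ ((mem_bdry G).mpr ⟨hvB, u, h, hadj⟩)
  have hi : bdry G (A ∩ B) ∩ bdry G (A ∪ B) ⊆ bdry G A ∩ bdry G B := by
    intro v hv
    obtain ⟨hv1, hv2⟩ := Finset.mem_inter.mp hv
    obtain ⟨_, u, hu, hadj⟩ := (mem_bdry G).mp hv1
    obtain ⟨hvn, _⟩ := (mem_bdry G).mp hv2
    have hvA : v ∉ A := fun h => hvn (Finset.mem_union_left _ h)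
    have hvB : v ∉ B := fun h => hvn (Finset.mem_union_right _ h)
    exact Finset.mem_inter.mpr
      ⟨(mem_bdry G).mpr ⟨hvA, u, (Finset.mem_inter.mp hu).1, hadj⟩,
       (mem_bdry G).mpr ⟨hvB, u, (Finset.mem_inter.mp hu).2, hadj⟩⟩
  calc (bdry G (A ∩ B)).card + (bdry G (A ∪ B)).card
      = (bdry G (A ∩ B) ∪ bdry G (A ∪ B)).card
        + (bdry G (A ∩ B) ∩ bdry G (A ∪ B)).card :=
        (Finset.card_union_add_card_inter _ _).symm
    _ ≤ (bdry G A ∪ bdry G B).card + (bdry G A ∩ bdry G B).card :=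
        Nat.add_le_add (Finset.card_le_card hu) (Finset.card_le_card hi)
    _ = (bdry G A).card + (bdry G B).card := Finset.card_union_add_card_inter _ _

lemma reach_self {x : V} {S : Finset V} (hx : x ∉ S) : x ∈ reachSet G x S := by
  refine ⟨SimpleGraph.Walk.nil, ?_⟩
  intro u hu
  simp only [SimpleGraph.Walk.support_nil, List.mem_singleton] at hu
  subst hu; exact hx

lemma reach_not_mem {x v : V} {S : Finset V} (h : v ∈ reachSet G x S) : v ∉ S := by
  obtain ⟨p, hp⟩ := h
  exact hp v p.end_mem_support

lemma reach_adj {x v u : V} {S : Finset V} (h : v ∈ reachSet G x S)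
    (hadj : G.Adj v u) (hu : u ∉ S) : u ∈ reachSet G x S := by
  obtain ⟨p, hp⟩ := h
  refine ⟨p.concat hadj, ?_⟩
  intro z hz
  rw [SimpleGraph.Walk.support_concat, List.mem_append] at hz
  rcases hz with hz | hz
  · exact hp z hz
  · simp only [List.mem_singleton] at hz; subst hz; exact hu

lemma walk_stay {A : Finset V} :
    ∀ {a v : V} (p : G.Walk a v), a ∈ A → (∀ u ∈ p.support, u ∉ bdry G A) → v ∈ A := by
  intro a v p
  induction p with
  | nil => exact fun h _ => h
  | @cons a b v h q ih =>
    intro ha havoid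
    have hb : b ∈ A := by
      by_contra hbA
      exact havoid b (by simp) ((mem_bdry G).mpr ⟨hbA, a, ha, h⟩)
    exact ih hb (fun u hu => havoid u (by simp [hu]))

lemma reach_bdry_subset {x : V} {A : Finset V} (hx : x ∈ A) :
    ∀ v ∈ reachSet G x (bdry G A), v ∈ A := by
  rintro v ⟨p, hp⟩
  exact walk_stay G p hx hp

lemma bdry_isSep {x : V} {W : Set V} {A : Finset V} (hx : x ∈ A)
    (hW : ∀ w ∈ W, w ∉ A) : IsSep G x W (bdry G A) := by
  constructor
  · intro hxB; exact ((mem_bdry G).mp hxB).1 hx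
  · intro w hw hr
    exact hW w hw (reach_bdry_subset G hx w hr)

lemma minSep_eq_bdry {x : V} {W : Set V} {S : Finset V} (h : IsMinSep G x W S) :
    S = bdry G (reachF G x S) := by
  apply Finset.Subset.antisymm
  · intro s hs
    rw [mem_bdry]
    constructor
    · intro hsR
      exact reach_not_mem G ((mem_reachF G).mp hsR) hs
    · by_contra hno
      push_neg at hno
      have hnadj : ∀ u ∈ reachSet G x S, ¬ G.Adj u s := fun u hu hadj =>
        (G.ne_of_adj hadj) (by
          exact absurd hadj (hno u ((mem_reachF G).mpr hu) |> fun hh => hh)) |>.elim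
      have hsep : IsSep G x W (S.erase s) := by
        constructor
        · intro hx; exact h.1.1 (Finset.mem_of_mem_erase hx)
        · rintro w hw ⟨p, hp⟩
          have key : ∀ {a v : V} (q : G.Walk a v), a ∈ reachSet G x S →
              (∀ u ∈ q.support, u ∉ S.erase s) → v ∈ reachSet G x S := by
            intro a v q
            induction q with
            | nil => exact fun hq _ => hq
            | @cons a b v hab q ih =>
              intro ha havoid
              have hb : b ∉ S := by
                intro hbS
                have hbs : b = s := by
                  by_contra hne
                  exact havoid b (by simp) (Finset.mem_erase.mpr ⟨hne, hbS⟩)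
                subst hbs
                exact hnadj a ha hab
              exact ih (reach_adj G ha hab hb) (fun u hu => havoid u (by simp [hu]))
          have hxR : x ∈ reachSet G x S := reach_self G h.1.1
          exact h.1.2 w hw (key p hxR hp)
      have hle := h.2 _ hsep
      have hlt : (S.erase s).card < S.card := Finset.card_erase_lt_of_mem hs
      omega
  · intro v hv
    rw [mem_bdry] at hv
    obtain ⟨hvR, u, hu, hadj⟩ := hv
    by_contra hvS
    exact hvR ((mem_reachF G).mpr (reach_adj G ((mem_reachF G).mp hu) hadj hvS))

end ClosestSep

theorem closest_min_separator_unique {V : Type*} [Fintype V] [DecidableEq V]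
    (G : SimpleGraph V) (x : V) (W : Set V) (hxW : x ∉ W) :
    ∃! S : Finset V, IsMinSep G x W S ∧
      ∀ S' : Finset V, IsMinSep G x W S' → reachSet G x S ⊆ reachSet G x S' := by
  classical
  open ClosestSep in
  have hsep_ex : ∃ S : Finset V, IsSep G x W S := by
    refine ⟨Finset.univ.filter (fun v => v ∈ W), ?_, ?_⟩
    · simp [hxW]
    · rintro w hw ⟨p, hp⟩
      exact hp w p.end_mem_support (by simp [hw])
  obtain ⟨S₀, hS₀⟩ := hsep_ex
  obtain ⟨Sm, hSm, hSmmin⟩ := Finset.exists_min_image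
    (Finset.univ.filter (fun S : Finset V => IsSep G x W S)) Finset.card
    ⟨S₀, by simp [hS₀]⟩
  simp only [Finset.mem_filter, Finset.mem_univ, true_and] at hSm hSmmin
  have hSmMin : IsMinSep G x W Sm := ⟨hSm, fun S' hS' => hSmmin S' (by simp [hS'])⟩
  obtain ⟨S₁, hS₁, hS₁min⟩ := Finset.exists_min_image
    (Finset.univ.filter (fun S : Finset V => IsMinSep G x W S))
    (fun S => (ClosestSep.reachF G x S).card) ⟨Sm, by simp [hSmMin]⟩
  simp only [Finset.mem_filter, Finset.mem_univ, true_and] at hS₁ hS₁min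
  have hS₁min' : ∀ S' : Finset V, IsMinSep G x W S' →
      (ClosestSep.reachF G x S₁).card ≤ (ClosestSep.reachF G x S').card :=
    fun S' hS' => hS₁min S' (by simp [hS'])
  have hmain : ∀ S₂ : Finset V, IsMinSep G x W S₂ →
      reachSet G x S₁ ⊆ reachSet G x S₂ := by
    intro S₂ hS₂
    set A := ClosestSep.reachF G x S₁ with hA
    set B := ClosestSep.reachF G x S₂ with hB
    have hxA : x ∈ A := (ClosestSep.mem_reachF G).mpr (ClosestSep.reach_self G hS₁.1.1)
    have hxB : x ∈ B := (ClosestSep.mem_reachF G).mpr (ClosestSep.reach_self G hS₂.1.1)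
    have hWA : ∀ w ∈ W, w ∉ A := fun w hw hwA =>
      hS₁.1.2 w hw ((ClosestSep.mem_reachF G).mp hwA)
    have hWB : ∀ w ∈ W, w ∉ B := fun w hw hwB =>
      hS₂.1.2 w hw ((ClosestSep.mem_reachF G).mp hwB)
    have hsepI : IsSep G x W (ClosestSep.bdry G (A ∩ B)) :=
      ClosestSep.bdry_isSep G (Finset.mem_inter.mpr ⟨hxA, hxB⟩)
        (fun w hw h => hWA w hw (Finset.mem_inter.mp h).1)
    have hsepU : IsSep G x W (ClosestSep.bdry G (A ∪ B)) :=
      ClosestSep.bdry_isSep G (Finset.mem_union_left _ hxA)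
        (fun w hw h => (Finset.mem_union.mp h).elim (hWA w hw) (hWB w hw))
    have hsub := ClosestSep.bdry_submod G A B
    rw [← ClosestSep.minSep_eq_bdry G hS₁, ← ClosestSep.minSep_eq_bdry G hS₂] at hsub
    have hI_ge := hS₁.2 _ hsepI
    have hU_ge := hS₁.2 _ hsepU
    have hcard12 : S₂.card ≤ S₁.card := hS₂.2 _ hS₁.1
    have hIcard : (ClosestSep.bdry G (A ∩ B)).card ≤ S₁.card := by omega
    have hImin : IsMinSep G x W (ClosestSep.bdry G (A ∩ B)) :=
      ⟨hsepI, fun S' hS' => le_trans hIcard (hS₁.2 S' hS')⟩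
    have hRsub : ClosestSep.reachF G x (ClosestSep.bdry G (A ∩ B)) ⊆ A ∩ B := by
      intro v hv
      exact ClosestSep.reach_bdry_subset G (Finset.mem_inter.mpr ⟨hxA, hxB⟩) v
        ((ClosestSep.mem_reachF G).mp hv)
    have h1 := hS₁min' _ hImin
    have h2 : (ClosestSep.reachF G x (ClosestSep.bdry G (A ∩ B))).card ≤ (A ∩ B).card :=
      Finset.card_le_card hRsub
    have h3 : A.card ≤ (A ∩ B).card := le_trans h1 h2
    have hEq : A ∩ B = A :=
      Finset.eq_of_subset_of_card_le Finset.inter_subset_left h3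
    have hAB : A ⊆ B := Finset.inter_eq_left.mp hEq
    intro v hv
    exact (ClosestSep.mem_reachF G).mp
      (hAB ((ClosestSep.mem_reachF G).mpr hv))
  refine ⟨S₁, ⟨hS₁, hmain⟩, ?_⟩
  rintro S₂ ⟨hS₂, hS₂closest⟩
  have hRR : reachSet G x S₂ = reachSet G x S₁ :=
    Set.Subset.antisymm (hS₂closest S₁ hS₁) (hmain S₂ hS₂)
  have hRF : ClosestSep.reachF G x S₂ = ClosestSep.reachF G x S₁ := by
    ext v
    rw [ClosestSep.mem_reachF, ClosestSep.mem_reachF, hRR]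
  rw [ClosestSep.minSep_eq_bdry G hS₂, ClosestSep.minSep_eq_bdry G hS₁, hRF]
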